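/- Let R be a commutative ℝ-algebra and M an invertible R-module (a finitely generated projective module of constant rank one, equivalently a module M admitting an R-module N with M ⊗_R N ≅ R). Let φ : M → M be an ℝ-linear map which is a first-order differential operator, i.e. for every f ∈ R the map m ↦ φ(f • m) − f • φ(m) is R-linear. Then φ is a derivation of M: there exists a unique ℝ-linear derivation X : R → R such that φ(f • m) = X(f) • m + f • φ(m) for all f ∈ R and m ∈ M. -/

import Mathlib

open TensorProduct

section Aux

variable {R M : Type*} [CommRing R]
  [AddCommGroup M] [Module R M]
  {N : Type*} [AddCommGroup N] [Module R N]

lemma aux_faithful (e : TensorProduct R M N ≃ₗ[R] R) (m₀ : M)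
    (h : ∀ n : N, (m₀ ⊗ₜ[R] n : TensorProduct R M N) = 0) : m₀ = 0 := by
  let K : TensorProduct R N M →ₗ[R] R :=
    e.toLinearMap ∘ₗ (TensorProduct.comm R N M).toLinearMap
  let β : TensorProduct R M (TensorProduct R N M) →ₗ[R] M :=
    (TensorProduct.rid R M).toLinearMap ∘ₗ LinearMap.lTensor M K
  let G : TensorProduct R M N →ₗ[R]
      TensorProduct R (TensorProduct R M N) M :=
    TensorProduct.lift (LinearMap.mk₂ R (fun m n => (m₀ ⊗ₜ[R] n) ⊗ₜ[R] m)
      (fun m m' n => by simp [tmul_add])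
      (fun r m n => by simp [tmul_smul])
      (fun m n n' => by simp [tmul_add, add_tmul])
      (fun r m n => by simp [tmul_smul, smul_tmul']))
  have hG : G = 0 := TensorProduct.ext' fun m n => by
    simp only [G, TensorProduct.lift.tmul, LinearMap.zero_apply]
    exact (by simp [h n] : (m₀ ⊗ₜ[R] n) ⊗ₜ[R] m = 0)
  have hGH : β ∘ₗ (TensorProduct.assoc R M N M).toLinearMap ∘ₗ G
      = (LinearMap.toSpanSingleton R M m₀) ∘ₗ e.toLinearMap := by
    apply TensorProduct.ext'
    intro m n
    show β (TensorProduct.assoc R M N M ((m₀ ⊗ₜ[R] n) ⊗ₜ[R] m)) = _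
    simp [β, K, LinearMap.toSpanSingleton_apply]
  have hx := congrArg (fun (F : TensorProduct R M N →ₗ[R] M) => F (e.symm 1)) hGH
  simp only [hG, LinearMap.comp_apply, LinearMap.zero_apply, map_zero] at hx
  simpa [LinearMap.toSpanSingleton_apply] using hx.symm

lemma aux_cancel (e : TensorProduct R M N ≃ₗ[R] R) (r r' : R)
    (h : ∀ m : M, r • m = r' • m) : r = r' := by
  have hmap : (LinearMap.lsmul R (TensorProduct R M N) r) = LinearMap.lsmul R _ r' :=
    TensorProduct.ext' fun m n => by
      simp only [LinearMap.lsmul_apply, smul_tmul', h m]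
  have hx := congrArg (fun F => e ((F : TensorProduct R M N →ₗ[R] _) (e.symm 1))) hmap
  simpa using hx

lemma aux_scalar (e : TensorProduct R M N ≃ₗ[R] R) (T : M →ₗ[R] M) :
    ∃ r : R, ∀ m : M, T m = r • m := by
  set u := e.symm 1 with hu
  refine ⟨e (T.rTensor N u), fun m => ?_⟩
  set r := e (T.rTensor N u) with hr
  have h1 : ∀ x : TensorProduct R M N, e (T.rTensor N x) = e x * r := by
    intro x
    have hsx : e.symm (e x) = e x • e.symm 1 := by
      rw [← map_smul, smul_eq_mul, mul_one]
    calc e (T.rTensor N x) = e (T.rTensor N (e.symm (e x))) := by simp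
    _ = e ((e x) • T.rTensor N (e.symm (1:R))) := by rw [hsx, map_smul]
    _ = e x * r := by rw [map_smul, smul_eq_mul, hr, hu]
  have h2 : ∀ n : N, ((T m - r • m) ⊗ₜ[R] n : TensorProduct R M N) = 0 := by
    intro n
    have hTm : e ((T m) ⊗ₜ[R] n) = e (m ⊗ₜ[R] n) * r := by
      have := h1 (m ⊗ₜ[R] n)
      simpa [LinearMap.rTensor_tmul] using this
    have hrm : e ((r • m) ⊗ₜ[R] n) = r * e (m ⊗ₜ[R] n) := by
      rw [← smul_tmul', map_smul, smul_eq_mul]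
    have heq : ((T m) ⊗ₜ[R] n : TensorProduct R M N) = (r • m) ⊗ₜ[R] n :=
      e.injective (by rw [hTm, hrm, mul_comm])
    rw [sub_tmul, heq, sub_self]
  have := aux_faithful e (T m - r • m) h2
  exact sub_eq_zero.mp this

end Aux


/-- If `M` is an invertible module over a commutative `ℝ`-algebra `R` (i.e. there is an
`R`-module `N` with `M ⊗[R] N ≅ R`), then every `ℝ`-linear first-order differential operator
`φ : M → M` (i.e. for every `f ∈ R` the map `m ↦ φ (f • m) - f • φ m` is `R`-linear)
is a derivation of `M`: there is a unique `ℝ`-linear derivation `X : R → R` (its symbol)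
such that `φ (f • m) = X f • m + f • φ m` for all `f` and `m`. -/
theorem first_order_operator_on_invertible_module_is_derivation
    {R M : Type*} [CommRing R] [Algebra ℝ R]
    [AddCommGroup M] [Module ℝ M] [Module R M] [IsScalarTower ℝ R M]
    (N : Type*) [AddCommGroup N] [Module R N]
    (e : TensorProduct R M N ≃ₗ[R] R)
    (φ : M →ₗ[ℝ] M)
    (hφ : ∀ f : R, IsLinearMap R (fun m : M => φ (f • m) - f • φ m)) :
    ∃! X : R →ₗ[ℝ] R,
      (∀ f g : R, X (f * g) = X f * g + f * X g) ∧
      (∀ (f : R) (m : M), φ (f • m) = X f • m + f • φ m) := by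
  -- the first-order defect operators
  let D : R → (M →ₗ[R] M) := fun f => IsLinearMap.mk' _ (hφ f)
  have hD : ∀ (f : R) (m : M), D f m = φ (f • m) - f • φ m := fun f m => rfl
  -- choose the scalar for each defect operator
  choose X₀ hX₀ using fun f : R => aux_scalar e (D f)
  have key : ∀ (f : R) (m : M), φ (f • m) = X₀ f • m + f • φ m := by
    intro f m
    have := (hX₀ f m).symm
    rw [hD] at this
    rw [this]
    abel
  -- ℝ-linearity of X₀
  have hadd : ∀ f g : R, X₀ (f + g) = X₀ f + X₀ g := by
    intro f g
    refine aux_cancel e _ _ fun m => ?_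
    have h1 := hX₀ (f + g) m
    have h2 := hX₀ f m
    have h3 := hX₀ g m
    rw [hD] at h1 h2 h3
    calc X₀ (f + g) • m = φ ((f + g) • m) - (f + g) • φ m := h1.symm
      _ = (φ (f • m) - f • φ m) + (φ (g • m) - g • φ m) := by
          rw [add_smul, add_smul, map_add]; abel
      _ = (X₀ f + X₀ g) • m := by rw [h2, h3, add_smul]
  have hsmul : ∀ (c : ℝ) (f : R), X₀ (c • f) = c • X₀ f := by
    intro c f
    refine aux_cancel e _ _ fun m => ?_
    have h1 := hX₀ (c • f) m
    have h2 := hX₀ f m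
    rw [hD] at h1 h2
    calc X₀ (c • f) • m = φ ((c • f) • m) - (c • f) • φ m := h1.symm
      _ = c • (φ (f • m) - f • φ m) := by
          rw [smul_assoc, smul_assoc, map_smul, smul_sub]
      _ = (c • X₀ f) • m := by rw [h2, smul_assoc]
  let X : R →ₗ[ℝ] R :=
    { toFun := X₀
      map_add' := hadd
      map_smul' := hsmul }
  refine ⟨X, ⟨?_, key⟩, ?_⟩
  · -- Leibniz rule
    intro f g
    refine aux_cancel e _ _ fun m => ?_
    have h1 := hX₀ (f * g) m
    have h2 := hX₀ f (g • m)
    have h3 := hX₀ g m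
    rw [hD] at h1 h2 h3
    have hfg : (f * g) • m = f • (g • m) := mul_smul f g m
    show X₀ (f * g) • m = (X₀ f * g + f * X₀ g) • m
    calc X₀ (f * g) • m = φ ((f * g) • m) - (f * g) • φ m := h1.symm
      _ = (φ (f • (g • m)) - f • φ (g • m)) + f • (φ (g • m) - g • φ m) := by
          rw [hfg, mul_smul, smul_sub]; abel
      _ = X₀ f • (g • m) + f • (X₀ g • m) := by rw [h2, h3]
      _ = (X₀ f * g + f * X₀ g) • m := by rw [add_smul, mul_smul, mul_smul]
  · -- uniqueness
    intro Y ⟨_, hY⟩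
    refine LinearMap.ext fun f => ?_
    refine aux_cancel e _ _ fun m => ?_
    have h1 := hY f m
    have h2 := key f m
    have : Y f • m + f • φ m = X₀ f • m + f • φ m := by rw [← h1, h2]
    exact add_right_cancel this
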